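/- Let N ∈ ℕ, let b : Fin N → ℝ with b_i ≠ 0 for every i, let J be a finite index set, n : J → ℝ, a : J → ℝ, and let m ≤ N be a natural number with ∑_{j ∈ J} n_j · (a_j)^i = 0 for every natural number i < m. Then, as the natural number t tends to infinity, the quantity t^{m−N} · (∑_{j ∈ J} n_j exp(a_j/t)) / ∏_{i=0}^{N−1} (1 − exp(−b_i/t)) converges to ((1/m!) ∑_{j ∈ J} n_j (a_j)^m) / ∏_{i=0}^{N−1} b_i. (Note that 1 − exp(−b_i/t) ≠ 0 for every t ≥ 1 since b_i ≠ 0, so the expression is well defined.) -/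
import Mathlib
open Filter Real Finset
section helpers

theorem lemB (c : ℝ) (hc : c ≠ 0) :
    Tendsto (fun t : ℕ => (t : ℝ) * (1 - Real.exp (-c / t))) atTop (nhds c) := by
  have hd : Tendsto (fun x : ℝ => (Real.exp x - 1) / x) (nhdsWithin 0 {0}ᶜ) (nhds 1) := by
    have H := hasDerivAt_iff_tendsto_slope.mp (Real.hasDerivAt_exp 0)
    rw [Real.exp_zero] at H
    exact H.congr fun x => by simp [slope_def_field, Real.exp_zero]
  have hx : Tendsto (fun t : ℕ => -c / (t : ℝ)) atTop (nhdsWithin 0 {0}ᶜ) := by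
    apply tendsto_nhdsWithin_of_tendsto_nhds_of_eventually_within
    · simpa using tendsto_const_div_atTop_nhds_zero_nat (-c)
    · filter_upwards [eventually_ge_atTop 1] with t ht
      have : (t : ℝ) ≠ 0 := by positivity
      simp [div_ne_zero, hc, neg_ne_zero, this]
  have key := (hd.comp hx).const_mul c
  rw [mul_one] at key
  refine key.congr' ?_
  filter_upwards [eventually_ge_atTop 1] with t ht
  have ht0 : (t : ℝ) ≠ 0 := by positivity
  show c * ((Real.exp (-c / t) - 1) / (-c / t)) = (t : ℝ) * (1 - Real.exp (-c / t))
  have hrw : (Real.exp (-c / t) - 1) / (-c / t) = (t : ℝ) * (1 - Real.exp (-c / t)) / c := by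
    rw [div_div_eq_mul_div, div_eq_div_iff (by simp [hc]) hc]
    ring
  rw [hrw, mul_comm, div_mul_cancel₀ _ hc]

theorem lemA (m : ℕ) (a : ℝ) :
    Tendsto (fun t : ℕ => (t : ℝ) ^ m *
      (Real.exp (a / t) - ∑ i ∈ range m, (a / t) ^ i / i.factorial))
      atTop (nhds (a ^ m / m.factorial)) := by
  set C : ℝ := |a| ^ (m + 1) * ((m + 2) / ((m + 1).factorial * (m + 1))) with hC
  have h0 : Tendsto (fun t : ℕ => (t : ℝ) ^ m *
      (Real.exp (a / t) - ∑ i ∈ range (m + 1), (a / t) ^ i / i.factorial)) atTop (nhds 0) := by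
    refine squeeze_zero_norm' (a := fun t : ℕ => C / t) ?_ ?_
    · filter_upwards [eventually_ge_atTop (max 1 ⌈|a|⌉₊)] with t ht
      have ht1 : (1 : ℕ) ≤ t := le_trans (le_max_left _ _) ht
      have ht0 : (0 : ℝ) < t := by exact_mod_cast ht1
      have hat : |a / t| ≤ 1 := by
        rw [abs_div, abs_of_pos ht0, div_le_one ht0]
        calc |a| ≤ ⌈|a|⌉₊ := Nat.le_ceil _
        _ ≤ t := by exact_mod_cast le_trans (le_max_right _ _) ht
      have hb := Real.exp_bound hat (Nat.succ_pos m)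
      norm_num [Nat.succ_eq_add_one] at hb
      rw [norm_mul, norm_pow, Real.norm_natCast, Real.norm_eq_abs]
      calc (t : ℝ) ^ m * |Real.exp (a / t) - ∑ i ∈ range (m + 1), (a / t) ^ i / i.factorial|
          ≤ (t : ℝ) ^ m * (|a / t| ^ (m + 1) * (((m : ℝ) + 1 + 1) / ((m + 1).factorial * ((m : ℝ) + 1)))) := by
            exact mul_le_mul_of_nonneg_left hb (by positivity)
        _ = C / t := by
            rw [abs_div, abs_of_pos ht0, div_pow, hC]
            field_simp
            ring
    · simpa using tendsto_const_div_atTop_nhds_zero_nat C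
  have key := h0.const_add (a ^ m / m.factorial)
  rw [add_zero] at key
  refine key.congr' ?_
  filter_upwards [eventually_ge_atTop 1] with t ht
  have ht0 : (t : ℝ) ≠ 0 := by positivity
  have hsum : ∑ i ∈ range (m + 1), (a / t) ^ i / i.factorial
      = (∑ i ∈ range m, (a / t) ^ i / i.factorial) + (a / t) ^ m / m.factorial :=
    Finset.sum_range_succ _ _
  have hpow : (t : ℝ) ^ m * ((a / t) ^ m / m.factorial) = a ^ m / m.factorial := by
    rw [mul_div_assoc', ← mul_pow, mul_div_cancel₀ _ ht0]
  show a ^ m / m.factorial + (t : ℝ) ^ m *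
      (Real.exp (a / t) - ∑ i ∈ range (m + 1), (a / t) ^ i / i.factorial) = _
  rw [hsum]
  linear_combination -hpow

end helpers

theorem stmt_2 (N : ℕ) (b : Fin N → ℝ) (hb : ∀ i, b i ≠ 0)
    {J : Type*} [Fintype J] (n a : J → ℝ) (m : ℕ) (hm : m ≤ N)
    (h : ∀ i : ℕ, i < m → ∑ j : J, n j * a j ^ i = 0) :
    Filter.Tendsto
      (fun t : ℕ => (t : ℝ) ^ ((m : ℤ) - (N : ℤ)) *
        (∑ j : J, n j * Real.exp (a j / (t : ℝ))) /
        ∏ i : Fin N, (1 - Real.exp (-(b i) / (t : ℝ))))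
      Filter.atTop
      (nhds (((1 / (Nat.factorial m : ℝ)) * ∑ j : J, n j * a j ^ m) / ∏ i : Fin N, b i)) := by
  have hden : Tendsto (fun t : ℕ => ∏ i : Fin N, (t : ℝ) * (1 - Real.exp (-(b i) / t)))
      atTop (nhds (∏ i : Fin N, b i)) :=
    tendsto_finset_prod _ (fun i _ => lemB (b i) (hb i))
  have hnum' : Tendsto (fun t : ℕ => ∑ j : J, n j * ((t : ℝ) ^ m *
      (Real.exp (a j / t) - ∑ i ∈ range m, (a j / t) ^ i / i.factorial)))
      atTop (nhds (∑ j : J, n j * (a j ^ m / m.factorial))) :=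
    tendsto_finset_sum _ (fun j _ => (lemA m (a j)).const_mul (n j))
  have hnum : Tendsto (fun t : ℕ => (t : ℝ) ^ m * ∑ j : J, n j * Real.exp (a j / t))
      atTop (nhds (∑ j : J, n j * (a j ^ m / m.factorial))) := by
    refine hnum'.congr' ?_
    filter_upwards [eventually_ge_atTop 1] with t ht
    have ht0 : (t : ℝ) ≠ 0 := by positivity
    have hz : ∑ j : J, n j * ((t : ℝ) ^ m * ∑ i ∈ range m, (a j / t) ^ i / i.factorial) = 0 := by
      have hterm : ∀ j : J, n j * ((t : ℝ) ^ m * ∑ i ∈ range m, (a j / t) ^ i / i.factorial)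
          = ∑ i ∈ range m, (t : ℝ) ^ m / t ^ i / i.factorial * (n j * a j ^ i) := by
        intro j
        rw [Finset.mul_sum, Finset.mul_sum]
        refine Finset.sum_congr rfl fun i _ => ?_
        rw [div_pow]
        ring
      rw [Finset.sum_congr rfl fun j _ => hterm j, Finset.sum_comm]
      refine Finset.sum_eq_zero fun i hi => ?_
      rw [← Finset.mul_sum, h i (Finset.mem_range.mp hi), mul_zero]
    calc ∑ j : J, n j * ((t : ℝ) ^ m *
          (Real.exp (a j / t) - ∑ i ∈ range m, (a j / t) ^ i / i.factorial))
        = (∑ j : J, n j * ((t : ℝ) ^ m * Real.exp (a j / t)))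
          - ∑ j : J, n j * ((t : ℝ) ^ m * ∑ i ∈ range m, (a j / t) ^ i / i.factorial) := by
          rw [← Finset.sum_sub_distrib]
          exact Finset.sum_congr rfl fun j _ => by ring
      _ = (t : ℝ) ^ m * ∑ j : J, n j * Real.exp (a j / t) := by
          rw [hz, sub_zero, Finset.mul_sum]
          exact Finset.sum_congr rfl fun j _ => by ring
  have hne : (∏ i : Fin N, b i) ≠ 0 := Finset.prod_ne_zero_iff.mpr fun i _ => hb i
  have main := hnum.div hden hne
  have hval : (∑ j : J, n j * (a j ^ m / m.factorial)) / ∏ i : Fin N, b i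
      = ((1 / (Nat.factorial m : ℝ)) * ∑ j : J, n j * a j ^ m) / ∏ i : Fin N, b i := by
    congr 1
    rw [Finset.mul_sum]
    exact Finset.sum_congr rfl fun j _ => by ring
  rw [hval] at main
  refine main.congr' ?_
  filter_upwards [eventually_ge_atTop 1] with t ht
  have ht0 : (t : ℝ) ≠ 0 := by positivity
  have hprodt : ∏ i : Fin N, (t : ℝ) * (1 - Real.exp (-(b i) / t))
      = (t : ℝ) ^ N * ∏ i : Fin N, (1 - Real.exp (-(b i) / t)) := by
    rw [Finset.prod_mul_distrib, Finset.prod_const, Finset.card_univ, Fintype.card_fin]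
  show (↑t ^ m * ∑ j : J, n j * Real.exp (a j / ↑t)) / ∏ i : Fin N, (↑t * (1 - Real.exp (-b i / ↑t))) = _
  rw [hprodt, ← div_div]
  congr 1
  rw [zpow_sub₀ ht0, zpow_natCast, zpow_natCast]
  ring
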